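/- Suppose {μ̂_x}_{x∈I} is a disintegration of μ̂ over π₀ with respect to μ: a family of Borel probability measures on Î, defined for μ-almost every x ∈ I, such that μ̂_x is supported on the fiber π₀^{−1}(x) and μ̂(E) = ∫_I μ̂_x(E) dμ(x) for every Borel set E ⊆ Î. Then for Lebesgue-almost every x ∈ I the measures satisfy α_x = φ(x)·μ̂_x, and consequently μ̂(E) = ∫_I α_x(E) dm(x) for every Borel set E ⊆ Î. -/

import Mathlib

open Set MeasureTheory ENNReal Topology

noncomputable section

namespace Tent

/-- The core interval `I = [0,1]`. -/
def I : Set ℝ := Set.Icc 0 1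

/-- The core tent map of slope `s`, `f(x) = min(s·x + 2 − s, s·(1 − x))`. -/
def f (s : ℝ) (x : ℝ) : ℝ := min (s * x + 2 - s) (s * (1 - x))

/-- The critical point `c = 1 − 1/s`. -/
def c (s : ℝ) : ℝ := 1 - 1 / s

/-- The post-critical set `PC = {c, f(c), f²(c), …}`. -/
def PC (s : ℝ) : Set ℝ := Set.range fun n => (f s)^[n] (c s)

/-- The inverse limit, as a set of sequences: `x_i ∈ I` and `f(x_{i+1}) = x_i`. -/
def IhatSet (s : ℝ) : Set (ℕ → ℝ) :=
  {x | (∀ i, x i ∈ I) ∧ ∀ i, f s (x (i + 1)) = x i}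

/-- The inverse limit space `Î`. -/
abbrev Ihat (s : ℝ) : Type := ↥(IhatSet s)

/-- The metric on `Î`: `d(x,y) = Σ_i |x_i − y_i|/2^i`. -/
def dHat (s : ℝ) (x y : Ihat s) : ℝ := ∑' i : ℕ, |x.1 i - y.1 i| / 2 ^ i

/-- The shift map on sequences: `x ↦ (f(x₀), x₀, x₁, …)`. -/
def fhatSeq (s : ℝ) (x : ℕ → ℝ) : ℕ → ℝ := fun n => Nat.casesOn n (f s (x 0)) fun k => x k

/-- The image under `f̂ⁿ` of a subset of `Î`. -/
def fhatImage (s : ℝ) (n : ℕ) (K : Set (Ihat s)) : Set (Ihat s) :=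
  {y : Ihat s | ∃ x ∈ K, y.1 = (fhatSeq s)^[n] (Subtype.val x)}

/-- The inverse `f̂⁻ⁿ` of the shift homeomorphism: drop the first `n` coordinates. -/
def fhatInv (s : ℝ) (n : ℕ) (x : Ihat s) : Ihat s :=
  ⟨fun i => x.1 (i + n), fun i => x.2.1 (i + n), fun i => by
    show f s (x.1 (i + 1 + n)) = x.1 (i + n)
    rw [show i + 1 + n = i + n + 1 from by omega]
    exact x.2.2 (i + n)⟩

/-- `γ` is an arc in `Î`: homeomorphic to a nontrivial interval of `ℝ`. -/
def IsArc (s : ℝ) (γ : Set (Ihat s)) : Prop :=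
  ∃ J : Set ℝ, J.OrdConnected ∧ J.Nontrivial ∧ Nonempty (γ ≃ₜ J)

/-- `γ` is a closed arc in `Î`: homeomorphic to `[0,1]`. -/
def IsClosedArc (s : ℝ) (γ : Set (Ihat s)) : Prop := Nonempty (γ ≃ₜ (Set.Icc (0:ℝ) 1))

/-- `γ` is an open arc in `Î`: homeomorphic to `(0,1)`. -/
def IsOpenArc (s : ℝ) (γ : Set (Ihat s)) : Prop := Nonempty (γ ≃ₜ (Set.Ioo (0:ℝ) 1))

/-- `x` is an endpoint of the closed arc `γ`. -/
def IsEndpoint (s : ℝ) (x : Ihat s) (γ : Set (Ihat s)) : Prop :=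
  ∃ (e : γ ≃ₜ (Set.Icc (0:ℝ) 1)) (hx : x ∈ γ), (e ⟨x, hx⟩).1 = 0 ∨ (e ⟨x, hx⟩).1 = 1

/-- `γ` is `m`-flat over the nontrivial interval `J ⊆ I`: the projection `π_m`
restricted to `γ` is a homeomorphism onto `J`. -/
def MFlatOver (s : ℝ) (m : ℕ) (γ : Set (Ihat s)) (J : Set ℝ) : Prop :=
  J ⊆ I ∧ J.OrdConnected ∧ J.Nontrivial ∧
    ∃ e : γ ≃ₜ J, ∀ x : γ, (e x).1 = x.1.1 m

/-- `γ` is an `m`-flat arc. -/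
def IsMFlat (s : ℝ) (m : ℕ) (γ : Set (Ihat s)) : Prop := ∃ J : Set ℝ, MFlatOver s m γ J

/-- `γ` is a flat arc: `m`-flat for some `m ≥ 0`. -/
def IsFlat (s : ℝ) (γ : Set (Ihat s)) : Prop := ∃ m : ℕ, IsMFlat s m γ

/-- `γ` is a flat closed arc. -/
def IsFlatClosedArc (s : ℝ) (γ : Set (Ihat s)) : Prop := IsClosedArc s γ ∧ IsFlat s γ

/-- `p 0, …, p k` occur in order along the closed arc `γ` (from one endpoint to the other). -/
def InOrderAlong (s : ℝ) (γ : Set (Ihat s)) (k : ℕ) (p : ℕ → Ihat s) : Prop :=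
  ∃ (e : γ ≃ₜ (Set.Icc (0:ℝ) 1)) (t : ℕ → Set.Icc (0:ℝ) 1),
    (∀ i j, i ≤ j → j ≤ k → t i ≤ t j) ∧ ∀ i ≤ k, (e.symm (t i)).1 = p i

/-- The arclength of a closed arc `γ` in the metric `d`: the supremum over finite
sequences of points occurring in order along `γ` of the sums of successive distances. -/
def arcLength (s : ℝ) (γ : Set (Ihat s)) : ℝ≥0∞ :=
  ⨆ (k : ℕ) (p : ℕ → Ihat s) (_ : InOrderAlong s γ k p),
    ENNReal.ofReal (∑ i ∈ Finset.range k, dHat s (p i) (p (i + 1)))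

/-- A continuum: a compact connected subset of `Î` with more than one point. -/
def IsContinuum (s : ℝ) (K : Set (Ihat s)) : Prop :=
  IsCompact K ∧ IsConnected K ∧ K.Nontrivial

/-- `K` is `ε`-dense in `Î`. -/
def EpsDense (s : ℝ) (ε : ℝ) (K : Set (Ihat s)) : Prop :=
  ∀ x : Ihat s, ∃ y ∈ K, dHat s x y ≤ ε

/-- `S` is metrically infinite: contains flat closed arcs of arbitrarily large length. -/
def MetricallyInfinite (s : ℝ) (S : Set (Ihat s)) : Prop :=
  ∀ N : ℝ, 0 < N → ∃ γ : Set (Ihat s), γ ⊆ S ∧ IsFlatClosedArc s γ ∧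
    ENNReal.ofReal N < arcLength s γ

/-- An arc is bi-dense if, for some point `p` in it, both connected components of
`γ ∖ {p}` are dense in `Î`. -/
def BiDense (s : ℝ) (γ : Set (Ihat s)) : Prop :=
  ∃ p ∈ γ, ∀ q ∈ γ \ {p}, Dense (connectedComponentIn (γ \ {p}) q)

/-- An arc is metrically bi-infinite if, for some point `p` in it, both connected
components of `γ ∖ {p}` are metrically infinite. -/
def MetricallyBiInfinite (s : ℝ) (γ : Set (Ihat s)) : Prop :=
  ∃ p ∈ γ, ∀ q ∈ γ \ {p}, MetricallyInfinite s (connectedComponentIn (γ \ {p}) q)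

/-- `x` is globally leaf regular: its path component is a bi-dense, metrically
bi-infinite open arc. -/
def GloballyLeafRegular (s : ℝ) (x : Ihat s) : Prop :=
  IsOpenArc s (pathComponent x) ∧ BiDense s (pathComponent x) ∧
    MetricallyBiInfinite s (pathComponent x)

/-- A `0`-box over `J`: a union of arcs, each `0`-flat over `J`. -/
def ZeroBoxOver (s : ℝ) (B : Set (Ihat s)) (J : Set ℝ) : Prop :=
  ∃ A : Set (Set (Ihat s)), (∀ γ ∈ A, MFlatOver s 0 γ J) ∧ B = ⋃₀ A

/-- An `m`-box over `J`: `f̂⁻ᵐ(B)` is a `0`-box over `J`. -/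
def MBoxOver (s : ℝ) (m : ℕ) (B : Set (Ihat s)) (J : Set ℝ) : Prop :=
  ZeroBoxOver s (fhatInv s m '' B) J

/-- The maximal `m`-box over `J`: the union of all arcs `m`-flat over `J`. -/
def maximalMBox (s : ℝ) (m : ℕ) (J : Set ℝ) : Set (Ihat s) :=
  ⋃₀ {γ : Set (Ihat s) | MFlatOver s m γ J}

/-- The point cylinder `[y₀, …, y_n]`. -/
def pointCyl (s : ℝ) (y : ℕ → ℝ) (n : ℕ) : Set (Ihat s) :=
  {z : Ihat s | ∀ i ≤ n, z.1 i = y i}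

/-! ### Auxiliary development for STATEMENT 17 -/

section TentBasics

variable {s : ℝ}

lemma one_lt_s (hs₁ : Real.sqrt 2 < s) : 1 < s := by
  have h1 : (1:ℝ) = Real.sqrt 1 := by simp
  have : (1:ℝ) < Real.sqrt 2 := by
    rw [h1]; exact Real.sqrt_lt_sqrt (by norm_num) (by norm_num)
  linarith

lemma s_pos (hs : 1 < s) : 0 < s := lt_trans one_pos hs

lemma c_pos (hs : 1 < s) : 0 < c s := by
  have h : 1 / s < 1 := (div_lt_one (s_pos hs)).mpr hs
  simp only [c]; linarith

lemma c_lt_one (hs : 1 < s) : c s < 1 := by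
  have h : 0 < 1 / s := by positivity
  simp only [c]; linarith

/-- The two branch domains of the tent map. -/
def Ibr (s : ℝ) : Bool → Set ℝ
  | false => Set.Ico 0 (c s)
  | true => Set.Icc (c s) 1

lemma Ibr_subset_I (hs : 1 < s) (β : Bool) : Ibr s β ⊆ I := by
  cases β
  · exact fun t ht => ⟨ht.1, le_trans (le_of_lt ht.2) (le_of_lt (c_lt_one hs))⟩
  · exact fun t ht => ⟨le_trans (le_of_lt (c_pos hs)) ht.1, ht.2⟩

lemma Ibr_unique {t : ℝ} {β β' : Bool} (h : t ∈ Ibr s β) (h' : t ∈ Ibr s β') : β = β' := by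
  cases β <;> cases β' <;> first
    | rfl
    | (exfalso; exact absurd h'.1 (not_le.mpr h.2))
    | (exfalso; exact absurd h.1 (not_le.mpr h'.2))

lemma mem_Ibr_total {x : ℝ} (hx : x ∈ I) : x ∈ Ibr s (decide (c s ≤ x)) := by
  rcases hd : decide (c s ≤ x) with _ | _
  · exact ⟨hx.1, not_le.mp (of_decide_eq_false hd)⟩
  · exact ⟨of_decide_eq_true hd, hx.2⟩

lemma measurableSet_Ibr (β : Bool) : MeasurableSet (Ibr s β) := by
  cases β
  · exact measurableSet_Ico
  · exact measurableSet_Icc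

/-- Affine branches of the tent map. -/
def eb (s : ℝ) (β : Bool) (t : ℝ) : ℝ := if β then s * (1 - t) else s * t + 2 - s

/-- Affine inverse branches of the tent map. -/
def gb (s : ℝ) (β : Bool) (u : ℝ) : ℝ := if β then 1 - u / s else (u + s - 2) / s

lemma gb_eb (hs : 1 < s) (β : Bool) (t : ℝ) : gb s β (eb s β t) = t := by
  have hs0 : s ≠ 0 := ne_of_gt (s_pos hs)
  cases β <;> simp only [gb, eb, if_true, if_false, Bool.false_eq_true] <;> field_simp <;> ring

lemma eb_gb (hs : 1 < s) (β : Bool) (u : ℝ) : eb s β (gb s β u) = u := by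
  have hs0 : s ≠ 0 := ne_of_gt (s_pos hs)
  cases β <;> simp only [gb, eb, if_true, if_false, Bool.false_eq_true] <;> field_simp <;> ring

lemma f_eq_eb (hs : 1 < s) {t : ℝ} {β : Bool} (h : t ∈ Ibr s β) : f s t = eb s β t := by
  have hs0 : 0 < s := s_pos hs
  cases β
  · have h2 : t < 1 - 1 / s := h.2
    have h3 : s * t < s * (1 - 1/s) := by nlinarith
    have : s * t + 2 - s ≤ s * (1 - t) := by
      have : s * (1 - 1/s) = s - 1 := by field_simp
      nlinarith
    simpa [f, eb] using min_eq_left this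
  · have h1 : (1:ℝ) - 1/s ≤ t := h.1
    have h3 : s * (1 - 1/s) ≤ s * t := by nlinarith
    have : s * (1 - t) ≤ s * t + 2 - s := by
      have : s * (1 - 1/s) = s - 1 := by field_simp
      nlinarith
    simpa [f, eb] using min_eq_right this

lemma f_gb (hs : 1 < s) {u : ℝ} {β : Bool} (h : gb s β u ∈ Ibr s β) : f s (gb s β u) = u := by
  rw [f_eq_eb hs h, eb_gb hs]

lemma gb_f (hs : 1 < s) {t : ℝ} {β : Bool} (h : t ∈ Ibr s β) : gb s β (f s t) = t := by
  rw [f_eq_eb hs h, gb_eb hs]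

lemma f_mem_I (hs : 1 < s) (hs₂ : s < 2) {x : ℝ} (hx : x ∈ I) : f s x ∈ I := by
  have hs0 : 0 < s := s_pos hs
  obtain ⟨hx0, hx1⟩ := hx
  constructor
  · apply le_min <;> nlinarith
  · rcases le_total x (c s) with h | h
    · refine le_trans (min_le_left _ _) ?_
      have h1 : x ≤ 1 - 1/s := h
      have h2 : s * x ≤ s * (1 - 1/s) := by nlinarith
      have hh : s * (1 - 1/s) = s - 1 := by field_simp
      nlinarith
    · refine le_trans (min_le_right _ _) ?_
      have h1 : (1:ℝ) - 1/s ≤ x := h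
      have h2 : s * (1 - 1/s) ≤ s * x := by nlinarith
      have hh : s * (1 - 1/s) = s - 1 := by field_simp
      nlinarith

lemma iter_f_mem_I (hs : 1 < s) (hs₂ : s < 2) {x : ℝ} (hx : x ∈ I) (n : ℕ) :
    (f s)^[n] x ∈ I := by
  induction n with
  | zero => exact hx
  | succ n ih => rw [Function.iterate_succ_apply']; exact f_mem_I hs hs₂ ih

lemma measurable_f : Measurable (f s) := by
  unfold f
  exact ((measurable_id.const_mul s).add_const 2 |>.sub_const s).min
    ((measurable_const.sub measurable_id).const_mul s)

lemma measurable_iter_f (n : ℕ) : Measurable ((f s)^[n]) :=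
  Measurable.iterate measurable_f n

lemma PC_iter {x : ℝ} (hx : x ∈ PC s) (k : ℕ) : (f s)^[k] x ∈ PC s := by
  obtain ⟨m, rfl⟩ := hx
  refine ⟨k + m, ?_⟩
  show (f s)^[k + m] (c s) = (f s)^[k] ((f s)^[m] (c s))
  rw [Function.iterate_add_apply]

lemma PC_countable : (PC s).Countable := Set.countable_range _

end TentBasics
section Chains

variable {s : ℝ}

/-- Composed inverse branches along the itinerary `b`. -/
def G (s : ℝ) (b : ℕ → Bool) : ℕ → ℝ → ℝ
  | 0 => id
  | n+1 => fun u => gb s (b n) (G s b n u)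

/-- Domain of definition of the `n`-fold inverse branch with itinerary `b`. -/
def R (s : ℝ) (b : ℕ → Bool) : ℕ → Set ℝ
  | 0 => Set.univ
  | n+1 => R s b n ∩ {u | gb s (b n) (G s b n u) ∈ Ibr s (b n)}

/-- The branch domain of `fⁿ` with itinerary `b`. -/
def D (s : ℝ) (b : ℕ → Bool) (n : ℕ) : Set ℝ :=
  {t | ∀ i, i < n → (f s)^[n-1-i] t ∈ Ibr s (b i)}

/-- The set of `z ∈ Î` whose backward itinerary starts with `b 0, …, b (n-1)`. -/
def Scyl (s : ℝ) (b : ℕ → Bool) (n : ℕ) : Set (Ihat s) :=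
  {z | ∀ i, i < n → z.1 (i+1) ∈ Ibr s (b i)}

lemma R_succ_subset {b : ℕ → Bool} {n : ℕ} : R s b (n+1) ⊆ R s b n :=
  Set.inter_subset_left

lemma R_mono {b : ℕ → Bool} {m n : ℕ} (h : m ≤ n) : R s b n ⊆ R s b m := by
  induction n with
  | zero => rw [Nat.le_zero.mp h]
  | succ n ih =>
      rcases Nat.lt_or_ge m (n+1) with h' | h'
      · exact fun u hu => ih (Nat.lt_succ_iff.mp h') (R_succ_subset hu)
      · have : m = n + 1 := le_antisymm h h'
        rw [this]

lemma G_succ_mem {b : ℕ → Bool} {n : ℕ} {u : ℝ} (hu : u ∈ R s b (n+1)) :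
    G s b (n+1) u ∈ Ibr s (b n) := hu.2

lemma f_G_succ (hs : 1 < s) {b : ℕ → Bool} {n : ℕ} {u : ℝ} (hu : u ∈ R s b (n+1)) :
    f s (G s b (n+1) u) = G s b n u := f_gb hs hu.2

lemma iter_f_G (hs : 1 < s) {b : ℕ → Bool} {u : ℝ} : ∀ {n : ℕ}, u ∈ R s b n →
    (f s)^[n] (G s b n u) = u := by
  intro n
  induction n with
  | zero => intro _; rfl
  | succ n ih =>
      intro hu
      rw [Function.iterate_succ_apply, f_G_succ hs hu]
      exact ih (R_succ_subset hu)

lemma G_mem_I (hs : 1 < s) {b : ℕ → Bool} {n : ℕ} {u : ℝ} (hu : u ∈ R s b n) (hI : u ∈ I) :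
    G s b n u ∈ I := by
  cases n with
  | zero => exact hI
  | succ n => exact Ibr_subset_I hs _ hu.2

lemma G_congr {b b' : ℕ → Bool} {n : ℕ} (h : ∀ i, i < n → b i = b' i) (u : ℝ) :
    G s b n u = G s b' n u := by
  induction n with
  | zero => rfl
  | succ n ih =>
      show gb s (b n) (G s b n u) = gb s (b' n) (G s b' n u)
      rw [h n (Nat.lt_succ_self n), ih (fun i hi => h i (Nat.lt_succ_of_lt hi))]

lemma R_congr {b b' : ℕ → Bool} {n : ℕ} (h : ∀ i, i < n → b i = b' i) :
    R s b n = R s b' n := by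
  induction n with
  | zero => rfl
  | succ n ih =>
      show R s b n ∩ _ = R s b' n ∩ _
      rw [ih (fun i hi => h i (Nat.lt_succ_of_lt hi))]
      congr 1
      ext u
      simp only [Set.mem_setOf_eq]
      rw [h n (Nat.lt_succ_self n), G_congr (s := s) (fun i hi => h i (Nat.lt_succ_of_lt hi)) u]

lemma D_zero {b : ℕ → Bool} : D s b 0 = Set.univ := by
  ext t; simp [D]

lemma D_succ {b : ℕ → Bool} {n : ℕ} :
    D s b (n+1) = Ibr s (b n) ∩ (f s) ⁻¹' (D s b n) := by
  ext t
  constructor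
  · intro h
    refine ⟨?_, fun i hi => ?_⟩
    · have := h n (Nat.lt_succ_self n)
      simpa using this
    · have := h i (Nat.lt_succ_of_lt hi)
      have harith : n + 1 - 1 - i = (n - 1 - i) + 1 := by omega
      rwa [harith, Function.iterate_succ_apply] at this
  · rintro ⟨h1, h2⟩ i hi
    rcases Nat.lt_or_ge i n with h' | h'
    · have := h2 i h'
      have harith : n + 1 - 1 - i = (n - 1 - i) + 1 := by omega
      rwa [harith, Function.iterate_succ_apply]
    · have : i = n := by omega
      subst this
      simpa using h1

lemma measurableSet_D {b : ℕ → Bool} {n : ℕ} : MeasurableSet (D s b n) := by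
  have : D s b n = ⋂ i ∈ Set.Iio n, ((f s)^[n-1-i]) ⁻¹' (Ibr s (b i)) := by
    ext t; simp [D]
  rw [this]
  exact MeasurableSet.biInter (Set.to_countable _)
    (fun i _ => (measurableSet_Ibr _).preimage (measurable_iter_f _))

lemma measurable_pin (n : ℕ) : Measurable (fun z : Ihat s => z.1 n) :=
  (measurable_pi_apply n).comp measurable_subtype_coe

lemma zcoord (z : Ihat s) : ∀ (k j : ℕ), z.1 j = (f s)^[k] (z.1 (j + k)) := by
  intro k
  induction k with
  | zero => intro j; rfl
  | succ k ih =>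
      intro j
      have h1 : z.1 (j + k) = f s (z.1 (j + k + 1)) := (z.2.2 (j + k)).symm
      rw [ih j, h1, show j + (k+1) = j + k + 1 from by omega]
      exact (Function.iterate_succ_apply (f s) k _).symm

lemma Scyl_eq_preimage {b : ℕ → Bool} {n : ℕ} :
    Scyl s b n = (fun z : Ihat s => z.1 n) ⁻¹' (D s b n) := by
  ext z
  constructor
  · intro h i hi
    have := h i hi
    rwa [zcoord z (n - 1 - i) (i + 1), show i + 1 + (n - 1 - i) = n from by omega] at this
  · intro h i hi
    have := h i hi
    rwa [zcoord z (n - 1 - i) (i + 1), show i + 1 + (n - 1 - i) = n from by omega]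

lemma measurableSet_Scyl {b : ℕ → Bool} {n : ℕ} : MeasurableSet (Scyl s b n) := by
  rw [Scyl_eq_preimage]
  exact measurableSet_D.preimage (measurable_pin n)

lemma Scyl_congr {b b' : ℕ → Bool} {n : ℕ} (h : ∀ i, i < n → b i = b' i) :
    Scyl s b n = Scyl s b' n := by
  ext z
  constructor <;> intro hz i hi
  · rw [← h i hi]; exact hz i hi
  · rw [h i hi]; exact hz i hi

lemma Scyl_mono {b : ℕ → Bool} {m n : ℕ} (h : m ≤ n) : Scyl s b n ⊆ Scyl s b m :=
  fun z hz i hi => hz i (lt_of_lt_of_le hi h)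

/-- Points of the fiber over `x` lying in an itinerary cylinder are exactly the points of
the corresponding backward chain. -/
lemma fiber_cyl (hs : 1 < s) {x : ℝ} {b : ℕ → Bool} {n : ℕ} (z : Ihat s)
    (hz0 : z.1 0 = x) (hzS : z ∈ Scyl s b n) :
    x ∈ R s b n ∧ ∀ i, i ≤ n → z.1 i = G s b i x := by
  induction n with
  | zero =>
      exact ⟨trivial, fun i hi => by rw [Nat.le_zero.mp hi]; exact hz0⟩
  | succ n ih =>
      obtain ⟨hR, hchain⟩ := ih (Scyl_mono (Nat.le_succ n) hzS)
      have hmem : z.1 (n+1) ∈ Ibr s (b n) := hzS n (Nat.lt_succ_self n)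
      have hfz : f s (z.1 (n+1)) = z.1 n := z.2.2 n
      have hgb : gb s (b n) (G s b n x) = z.1 (n+1) := by
        rw [← hchain n le_rfl, ← hfz, gb_f hs hmem]
      constructor
      · exact ⟨hR, by rw [Set.mem_setOf_eq, hgb]; exact hmem⟩
      · intro i hi
        rcases Nat.lt_or_ge i (n+1) with h' | h'
        · exact hchain i (Nat.lt_succ_iff.mp h')
        · have : i = n + 1 := by omega
          subst this
          exact hgb.symm

lemma cyl_fiber_eq (hs : 1 < s) {x : ℝ} {b : ℕ → Bool} {n : ℕ} (hu : x ∈ R s b n) :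
    {z : Ihat s | z.1 0 = x} ∩ Scyl s b n = pointCyl s (fun i => G s b i x) n := by
  ext z
  constructor
  · rintro ⟨hz0, hzS⟩
    exact fun i hi => (fiber_cyl hs z hz0 hzS).2 i hi
  · intro hz
    have hz0 : z.1 0 = x := hz 0 (Nat.zero_le n)
    refine ⟨hz0, fun i hi => ?_⟩
    rw [hz (i+1) hi]
    exact G_succ_mem (R_mono hi hu)

lemma cyl_fiber_empty (hs : 1 < s) {x : ℝ} {b : ℕ → Bool} {n : ℕ} (hu : x ∉ R s b n) :
    {z : Ihat s | z.1 0 = x} ∩ Scyl s b n = ∅ := by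
  ext z
  simp only [Set.mem_inter_iff, Set.mem_setOf_eq, Set.mem_empty_iff_false, iff_false, not_and]
  intro hz0 hzS
  exact hu (fiber_cyl hs z hz0 hzS).1

end Chains
section Itineraries

variable {s : ℝ}

lemma exists_itinerary (hs : 1 < s) (hs₂ : s < 2) (n : ℕ) :
    ∀ y : ℝ, y ∈ I → ∃ b : ℕ → Bool,
      (f s)^[n] y ∈ R s b n ∧ G s b n ((f s)^[n] y) = y := by
  induction n with
  | zero => exact fun y _ => ⟨fun _ => false, trivial, rfl⟩
  | succ n ih =>
      intro y hy
      obtain ⟨b, h1, h2⟩ := ih (f s y) (f_mem_I hs hs₂ hy)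
      set β := decide (c s ≤ y) with hβ
      have hyβ : y ∈ Ibr s β := mem_Ibr_total hy
      set b' : ℕ → Bool := Function.update b n β with hb'
      have hagree : ∀ i, i < n → b' i = b i := fun i hi =>
        Function.update_of_ne (Nat.ne_of_lt hi) _ _
      have hu : (f s)^[n+1] y = (f s)^[n] (f s y) := Function.iterate_succ_apply (f s) n y
      have hG : G s b' n ((f s)^[n+1] y) = f s y := by
        rw [hu, G_congr (s := s) hagree, h2]
      have hR : (f s)^[n+1] y ∈ R s b' n := by
        rw [hu, R_congr (s := s) hagree]; exact h1
      have hb'n : b' n = β := Function.update_self n β b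
      have hgb : gb s (b' n) (G s b' n ((f s)^[n+1] y)) = y := by
        rw [hG, hb'n]; exact gb_f hs hyβ
      refine ⟨b', ⟨hR, ?_⟩, hgb⟩
      rw [Set.mem_setOf_eq, hgb, hb'n]
      exact hyβ

lemma chain_unique (hs : 1 < s) {u : ℝ} {b b' : ℕ → Bool} : ∀ {n : ℕ},
    u ∈ R s b n → u ∈ R s b' n → G s b n u = G s b' n u → ∀ i, i < n → b i = b' i := by
  intro n
  induction n with
  | zero => intro _ _ _ i hi; omega
  | succ n ih =>
      intro hR hR' hG i hi
      have hGn : G s b n u = G s b' n u := by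
        have e1 : f s (G s b (n+1) u) = G s b n u := f_G_succ hs hR
        have e2 : f s (G s b' (n+1) u) = G s b' n u := f_G_succ hs hR'
        rw [← e1, ← e2, hG]
      rcases Nat.lt_or_ge i n with h' | h'
      · exact ih (R_succ_subset hR) (R_succ_subset hR') hGn i h'
      · have : i = n := by omega
        subst this
        have m1 : G s b (i+1) u ∈ Ibr s (b i) := G_succ_mem hR
        have m2 : G s b' (i+1) u ∈ Ibr s (b' i) := G_succ_mem hR'
        rw [hG] at m1
        exact Ibr_unique m1 m2

/-- Extension of a finite itinerary by `false`. -/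
def extb (n : ℕ) (b : Fin n → Bool) : ℕ → Bool := fun i => if h : i < n then b ⟨i, h⟩ else false

lemma extb_lt {n : ℕ} (b : Fin n → Bool) {i : ℕ} (hi : i < n) : extb n b i = b ⟨i, hi⟩ :=
  dif_pos hi

/-- The preimages of `u` under `fⁿ` inside `I` are classified by admissible itineraries. -/
lemma preimage_equiv (hs : 1 < s) (hs₂ : s < 2) {u : ℝ} (hu : u ∈ I) (n : ℕ) :
    ∃ e : {b : Fin n → Bool // u ∈ R s (extb n b) n} ≃ {y : ℝ // y ∈ I ∧ (f s)^[n] y = u},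
      ∀ b, (e b).1 = G s (extb n b.1) n u := by
  have hto : ∀ b : {b : Fin n → Bool // u ∈ R s (extb n b) n},
      G s (extb n b.1) n u ∈ I ∧ (f s)^[n] (G s (extb n b.1) n u) = u :=
    fun b => ⟨G_mem_I hs b.2 hu, iter_f_G hs b.2⟩
  let g : {b : Fin n → Bool // u ∈ R s (extb n b) n} → {y : ℝ // y ∈ I ∧ (f s)^[n] y = u} :=
    fun b => ⟨G s (extb n b.1) n u, hto b⟩
  have hinj : Function.Injective g := by
    rintro ⟨b1, h1⟩ ⟨b2, h2⟩ hg
    have : G s (extb n b1) n u = G s (extb n b2) n u := congrArg Subtype.val hg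
    have hbits := chain_unique hs h1 h2 this
    refine Subtype.ext (funext fun i => ?_)
    have := hbits i.1 i.2
    rw [extb_lt b1 i.2, extb_lt b2 i.2] at this
    simpa using this
  have hsurj : Function.Surjective g := by
    rintro ⟨y, hyI, hyu⟩
    obtain ⟨b, hR, hG⟩ := exists_itinerary hs hs₂ n y hyI
    rw [hyu] at hR hG
    set bf : Fin n → Bool := fun i => b i.1 with hbf
    have hagree : ∀ i, i < n → extb n bf i = b i := fun i hi => by
      rw [extb_lt bf hi]
    have hRf : u ∈ R s (extb n bf) n := by rw [R_congr (s := s) hagree]; exact hR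
    refine ⟨⟨bf, hRf⟩, Subtype.ext ?_⟩
    show G s (extb n bf) n u = y
    rw [G_congr (s := s) hagree, hG]
  exact ⟨Equiv.ofBijective g ⟨hinj, hsurj⟩, fun b => rfl⟩

lemma G_not_PC (hs : 1 < s) {u : ℝ} (hu : u ∉ PC s) {b : ℕ → Bool} {n : ℕ}
    (hR : u ∈ R s b n) : G s b n u ∉ PC s := by
  intro hmem
  exact hu (by rw [← iter_f_G hs hR]; exact PC_iter hmem n)

/-- The transfer-operator identity, summed over itineraries. -/
lemma phi_sum (hs : 1 < s) (hs₂ : s < 2) (φ : ℝ → ℝ)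
    (hφeq : ∀ x ∈ I \ PC s, ∀ n : ℕ,
      φ x = ∑' y : {y : ℝ // y ∈ I ∧ (f s)^[n] y = x}, φ y.1 / s ^ n)
    {u : ℝ} (hu : u ∈ I \ PC s) (n : ℕ) :
    φ u = ∑ b : Fin n → Bool, Set.indicator {b : Fin n → Bool | u ∈ R s (extb n b) n}
      (fun b => φ (G s (extb n b) n u) / s ^ n) b := by
  classical
  obtain ⟨e, he⟩ := preimage_equiv hs hs₂ hu.1 n
  have h1 := hφeq u hu n
  have h2 : ∑' y : {y : ℝ // y ∈ I ∧ (f s)^[n] y = u}, φ y.1 / s ^ n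
      = ∑' b : {b : Fin n → Bool // u ∈ R s (extb n b) n},
          φ (G s (extb n b.1) n u) / s ^ n := by
    rw [← Equiv.tsum_eq e (fun y => φ y.1 / s ^ n)]
    congr 1
    funext b
    rw [he b]
  have h3 : ∑' b : {b : Fin n → Bool // u ∈ R s (extb n b) n},
        φ (G s (extb n b.1) n u) / s ^ n
      = ∑' b : Fin n → Bool, Set.indicator {b : Fin n → Bool | u ∈ R s (extb n b) n}
          (fun b => φ (G s (extb n b) n u) / s ^ n) b := by
    exact tsum_subtype {b : Fin n → Bool | u ∈ R s (extb n b) n}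
      (fun b => φ (G s (extb n b) n u) / s ^ n)
  rw [h1, h2, h3, tsum_fintype]
end Itineraries
section ChangeOfVariables

variable {s : ℝ}

lemma map_volume_affine {a : ℝ} (b : ℝ) (ha : a ≠ 0) :
    Measure.map (fun x => a * x + b) volume = ENNReal.ofReal |a⁻¹| • volume := by
  have hcomp : (fun x : ℝ => a * x + b) = (fun x : ℝ => x + b) ∘ (fun x : ℝ => a * x) := rfl
  rw [hcomp, ← Measure.map_map (measurable_add_const b) (measurable_const_mul a)]
  rw [show (fun x : ℝ => a * x) = (a * ·) from rfl, Real.map_volume_mul_left ha,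
    Measure.map_smul, map_add_right_eq_self volume b]

lemma lintegral_comp_affine {a : ℝ} (b : ℝ) (ha : a ≠ 0) (T : ℝ → ℝ≥0∞) :
    ∫⁻ t, T (a * t + b) ∂volume = ENNReal.ofReal |a⁻¹| * ∫⁻ u, T u ∂volume := by
  have he : ∀ t, (affineHomeomorph a b ha) t = a * t + b := fun t => rfl
  have h1 : ∫⁻ t, T (a * t + b) ∂volume
      = ∫⁻ u, T u ∂(Measure.map (affineHomeomorph a b ha).toMeasurableEquiv volume) := by
    rw [MeasureTheory.lintegral_map_equiv]
    rfl
  rw [h1]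
  have h2 : Measure.map (affineHomeomorph a b ha).toMeasurableEquiv volume
      = Measure.map (fun x => a * x + b) volume := by
    congr 1
  rw [h2, map_volume_affine b ha, lintegral_smul_measure, smul_eq_mul]

/-- One-step change of variables for a branch of the tent map. -/
lemma cov1 (hs : 1 < s) (β : Bool) (Ξ θ : ℝ → ℝ≥0∞) :
    ∫⁻ t, (Ibr s β).indicator (fun t => Ξ (f s t) * θ t) t ∂volume
      = ENNReal.ofReal (1/s) *
        ∫⁻ u, ((gb s β) ⁻¹' (Ibr s β)).indicator (fun u => Ξ u * θ (gb s β u)) u ∂volume := by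
  have hs0 : 0 < s := s_pos hs
  have key : ∀ t, (Ibr s β).indicator (fun t => Ξ (f s t) * θ t) t
      = ((gb s β ⁻¹' Ibr s β).indicator (fun u => Ξ u * θ (gb s β u))) (eb s β t) := by
    intro t
    by_cases ht : t ∈ Ibr s β
    · have hmem : eb s β t ∈ (gb s β) ⁻¹' (Ibr s β) := by
        simp only [Set.mem_preimage, gb_eb hs]; exact ht
      rw [Set.indicator_of_mem ht, Set.indicator_of_mem hmem, gb_eb hs, f_eq_eb hs ht]
    · have hmem : eb s β t ∉ (gb s β) ⁻¹' (Ibr s β) := by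
        simp only [Set.mem_preimage, gb_eb hs]; exact ht
      rw [Set.indicator_of_notMem ht, Set.indicator_of_notMem hmem]
  rw [lintegral_congr key]
  have habs : |s⁻¹| = 1/s := by
    rw [abs_of_pos (by positivity)]; exact (one_div s).symm
  cases β
  · have h : ∀ t, eb s false t = s * t + (2 - s) := by
      intro t; simp only [eb, Bool.false_eq_true, if_false]; ring
    rw [lintegral_congr (g := fun t =>
        ((gb s false ⁻¹' Ibr s false).indicator (fun u => Ξ u * θ (gb s false u)))
          (s * t + (2 - s))) (fun t => by rw [h t]),
      lintegral_comp_affine (2 - s) (ne_of_gt hs0), habs]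
  · have h : ∀ t, eb s true t = (-s) * t + s := by
      intro t; simp only [eb, if_true]; ring
    rw [lintegral_congr (g := fun t =>
        ((gb s true ⁻¹' Ibr s true).indicator (fun u => Ξ u * θ (gb s true u)))
          ((-s) * t + s)) (fun t => by rw [h t]),
      lintegral_comp_affine s (neg_ne_zero.mpr (ne_of_gt hs0))]
    rw [show (-s)⁻¹ = -(s⁻¹) by ring, abs_neg, habs]

lemma G_succ_eq (b : ℕ → Bool) (n : ℕ) (u : ℝ) :
    G s b (n+1) u = gb s (b n) (G s b n u) := rfl

lemma R_succ_eq (b : ℕ → Bool) (n : ℕ) :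
    R s b (n+1) = R s b n ∩ {u | gb s (b n) (G s b n u) ∈ Ibr s (b n)} := rfl

/-- `n`-step change of variables along an itinerary. -/
lemma cov (hs : 1 < s) (b : ℕ → Bool) : ∀ (n : ℕ) (Θ θ : ℝ → ℝ≥0∞),
    ∫⁻ t, (D s b n).indicator (fun t => Θ ((f s)^[n] t) * θ t) t ∂volume
      = ENNReal.ofReal (1/s) ^ n *
        ∫⁻ u, (R s b n).indicator (fun u => Θ u * θ (G s b n u)) u ∂volume := by
  intro n
  induction n with
  | zero =>
      intro Θ θ
      show ∫⁻ t, (D s b 0).indicator _ t ∂volume = 1 * ∫⁻ u, (R s b 0).indicator _ u ∂volume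
      rw [D_zero, one_mul]
      rfl
  | succ n ih =>
      intro Θ θ
      have hstep1 : ∀ t, (D s b (n+1)).indicator (fun t => Θ ((f s)^[n+1] t) * θ t) t
          = (Ibr s (b n)).indicator (fun t =>
              ((D s b n).indicator (fun v => Θ ((f s)^[n] v)) (f s t)) * θ t) t := by
        intro t
        rw [D_succ]
        by_cases h1 : t ∈ Ibr s (b n) <;> by_cases h2 : f s t ∈ D s b n
        · rw [Set.indicator_of_mem (Set.mem_inter h1 (show t ∈ f s ⁻¹' D s b n from h2)), Set.indicator_of_mem h1,
            Set.indicator_of_mem h2, Function.iterate_succ_apply]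
        · rw [Set.indicator_of_notMem (fun hh => h2 hh.2), Set.indicator_of_mem h1,
            Set.indicator_of_notMem h2, zero_mul]
        · rw [Set.indicator_of_notMem (fun hh => h1 hh.1), Set.indicator_of_notMem h1]
        · rw [Set.indicator_of_notMem (fun hh => h1 hh.1), Set.indicator_of_notMem h1]
      rw [lintegral_congr hstep1,
        cov1 hs (b n) (fun v => (D s b n).indicator (fun v => Θ ((f s)^[n] v)) v) θ]
      have hstep2 : ∀ u, ((gb s (b n)) ⁻¹' (Ibr s (b n))).indicator
            (fun u => ((D s b n).indicator (fun v => Θ ((f s)^[n] v)) u) * θ (gb s (b n) u)) u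
          = (D s b n).indicator (fun u => Θ ((f s)^[n] u) *
              (((gb s (b n)) ⁻¹' (Ibr s (b n))).indicator (fun v => θ (gb s (b n) v)) u)) u := by
        intro u
        by_cases h1 : u ∈ (gb s (b n)) ⁻¹' (Ibr s (b n)) <;> by_cases h2 : u ∈ D s b n
        · rw [Set.indicator_of_mem h1, Set.indicator_of_mem h2, Set.indicator_of_mem h2,
            Set.indicator_of_mem h1]
        · rw [Set.indicator_of_mem h1, Set.indicator_of_notMem h2,
            Set.indicator_of_notMem h2, zero_mul]
        · rw [Set.indicator_of_notMem h1, Set.indicator_of_mem h2, Set.indicator_of_notMem h1,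
            mul_zero]
        · rw [Set.indicator_of_notMem h1, Set.indicator_of_notMem h2]
      rw [lintegral_congr hstep2,
        ih Θ (fun v => ((gb s (b n)) ⁻¹' (Ibr s (b n))).indicator (fun v => θ (gb s (b n) v)) v)]
      have hstep3 : ∀ u, (R s b n).indicator (fun u => Θ u *
            (((gb s (b n)) ⁻¹' (Ibr s (b n))).indicator (fun v => θ (gb s (b n) v)) (G s b n u))) u
          = (R s b (n+1)).indicator (fun u => Θ u * θ (G s b (n+1) u)) u := by
        intro u
        by_cases h1 : u ∈ R s b n <;>
          by_cases h2 : gb s (b n) (G s b n u) ∈ Ibr s (b n)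
        · rw [Set.indicator_of_mem h1, Set.indicator_of_mem (show u ∈ R s b (n+1) from ⟨h1, h2⟩),
            Set.indicator_of_mem
              (show G s b n u ∈ gb s (b n) ⁻¹' Ibr s (b n) from h2), G_succ_eq]
        · rw [Set.indicator_of_mem h1,
            Set.indicator_of_notMem (show u ∉ R s b (n+1) from fun hh => h2 hh.2),
            Set.indicator_of_notMem
              (show G s b n u ∉ gb s (b n) ⁻¹' Ibr s (b n) from h2), mul_zero]
        · rw [Set.indicator_of_notMem h1,
            Set.indicator_of_notMem (show u ∉ R s b (n+1) from fun hh => h1 hh.1)]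
        · rw [Set.indicator_of_notMem h1,
            Set.indicator_of_notMem (show u ∉ R s b (n+1) from fun hh => h1 hh.1)]
      rw [lintegral_congr hstep3, pow_succ]
      ring

lemma R_subset_I (hs : 1 < s) (hs₂ : s < 2) {b : ℕ → Bool} {n : ℕ} (hn : 1 ≤ n) :
    R s b n ⊆ I := by
  intro u hu
  have h1 : u ∈ R s b 1 := R_mono hn hu
  have h2 : gb s (b 0) u ∈ Ibr s (b 0) := h1.2
  have h3 : f s (gb s (b 0) u) = u := f_gb hs h2
  rw [← h3]
  exact f_mem_I hs hs₂ (Ibr_subset_I hs _ h2)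

end ChangeOfVariables
section LowerIntegral

/-- If the (lower) Lebesgue integrals of an arbitrary function `g` agree with those of a
measurable function `h` on every measurable set, then `h ≤ g` almost everywhere. -/
lemma ae_le_of_forall_lintegral_indicator_eq {X : Type*} [MeasurableSpace X]
    {ν : Measure X} [IsFiniteMeasure ν] {g h : X → ℝ≥0∞} (hh : Measurable h)
    (H : ∀ A : Set X, MeasurableSet A →
      ∫⁻ x, A.indicator g x ∂ν = ∫⁻ x, A.indicator h x ∂ν) :
    ∀ᵐ x ∂ν, h x ≤ g x := by
  have hN : ∀ q r : ℚ, 0 ≤ q → (q : ℝ) < r →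
      ν {x | g x ≤ ENNReal.ofReal q ∧ ENNReal.ofReal r ≤ h x} = 0 := by
    intro q r hq hqr
    set N := {x | g x ≤ ENNReal.ofReal q ∧ ENNReal.ofReal r ≤ h x} with hNdef
    set M := toMeasurable ν N with hMdef
    have hNM : N ⊆ M := subset_toMeasurable ν N
    have hMmeas : MeasurableSet M := measurableSet_toMeasurable ν N
    have hνM : ν M = ν N := measure_toMeasurable N
    -- lower bound for the `h`-integral
    have hlow : ENNReal.ofReal r * ν M ≤ ∫⁻ x, M.indicator h x ∂ν := by
      have hsub : N ⊆ M ∩ {x | ENNReal.ofReal r ≤ h x} := fun x hx => ⟨hNM hx, hx.2⟩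
      have hmeas2 : MeasurableSet (M ∩ {x | ENNReal.ofReal r ≤ h x}) :=
        hMmeas.inter (hh measurableSet_Ici)
      have hpt : ∀ x, (M ∩ {x | ENNReal.ofReal r ≤ h x}).indicator
          (fun _ => ENNReal.ofReal r) x ≤ M.indicator h x := by
        intro x
        by_cases hx : x ∈ M ∩ {x | ENNReal.ofReal r ≤ h x}
        · rw [Set.indicator_of_mem hx, Set.indicator_of_mem hx.1]
          exact hx.2
        · rw [Set.indicator_of_notMem hx]
          exact zero_le
      calc ENNReal.ofReal r * ν M = ENNReal.ofReal r * ν N := by rw [hνM]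
        _ ≤ ENNReal.ofReal r * ν (M ∩ {x | ENNReal.ofReal r ≤ h x}) :=
            mul_le_mul_right (measure_mono hsub) _
        _ = ∫⁻ x, (M ∩ {x | ENNReal.ofReal r ≤ h x}).indicator
              (fun _ => ENNReal.ofReal r) x ∂ν := by
            rw [lintegral_indicator_const hmeas2, mul_comm]
        _ ≤ ∫⁻ x, M.indicator h x ∂ν := lintegral_mono hpt
    -- upper bound for the `g`-integral
    obtain ⟨g₁, hg₁meas, hg₁le, hg₁int⟩ := exists_measurable_le_lintegral_eq
      (μ := ν) (M.indicator g)
    set V := {x | ENNReal.ofReal q < g₁ x} with hVdef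
    have hVmeas : MeasurableSet V := measurableSet_lt measurable_const hg₁meas
    have hVM : V ⊆ M := by
      intro x hx
      by_contra hxM
      have : g₁ x ≤ 0 := by
        have := hg₁le x
        rwa [Set.indicator_of_notMem hxM] at this
      have hx' : ENNReal.ofReal q < 0 := lt_of_lt_of_le hx this
      simp at hx'
    have hNV : N ⊆ M \ V := by
      intro x hx
      refine ⟨hNM hx, fun hxV => ?_⟩
      have h1 : g₁ x ≤ g x := by
        have := hg₁le x
        rwa [Set.indicator_of_mem (hNM hx)] at this
      exact absurd (lt_of_lt_of_le (lt_of_lt_of_le hxV h1) hx.1) (lt_irrefl _)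
    have hνV : ν V = 0 := by
      have h1 : ν M ≤ ν (M \ V) := by rw [hνM]; exact measure_mono hNV
      have h2 : ν (M ∩ V) + ν (M \ V) = ν M := measure_inter_add_diff M hVmeas
      have h3 : ν (M ∩ V) = 0 := by
        by_contra h3
        have : ν M < ν (M ∩ V) + ν (M \ V) := by
          have hfin : ν (M \ V) ≠ ∞ := measure_ne_top ν _
          calc ν M ≤ ν (M \ V) := h1
            _ < ν (M \ V) + ν (M ∩ V) := ENNReal.lt_add_right hfin h3
            _ = ν (M ∩ V) + ν (M \ V) := add_comm _ _
        rw [h2] at this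
        exact absurd this (lt_irrefl _)
      rwa [Set.inter_eq_right.mpr hVM] at h3
    have hup : ∫⁻ x, M.indicator g x ∂ν ≤ ENNReal.ofReal q * ν M := by
      rw [hg₁int]
      have hae : g₁ ≤ᵐ[ν] M.indicator (fun _ => ENNReal.ofReal q) := by
        have : ∀ᵐ x ∂ν, x ∉ V := by
          rw [ae_iff]
          simpa using hνV
        filter_upwards [this] with x hxV
        by_cases hxM : x ∈ M
        · rw [Set.indicator_of_mem hxM]
          exact not_lt.mp hxV
        · rw [Set.indicator_of_notMem hxM]
          have := hg₁le x
          rwa [Set.indicator_of_notMem hxM] at this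
      calc ∫⁻ x, g₁ x ∂ν ≤ ∫⁻ x, M.indicator (fun _ => ENNReal.ofReal q) x ∂ν :=
            lintegral_mono_ae hae
        _ = ENNReal.ofReal q * ν M := by rw [lintegral_indicator_const hMmeas, mul_comm]
    -- combine
    have hcomb : ENNReal.ofReal r * ν M ≤ ENNReal.ofReal q * ν M :=
      hlow.trans ((H M hMmeas).symm.trans_le hup)
    by_contra hνN
    have hM0 : ν M ≠ 0 := by rwa [hνM]
    have hr0 : (0:ℝ) < r := lt_of_le_of_lt (by exact_mod_cast hq) hqr
    have hlt : ENNReal.ofReal q < ENNReal.ofReal r := by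
      rw [ENNReal.ofReal_lt_ofReal_iff hr0]
      exact_mod_cast hqr
    have : ENNReal.ofReal q * ν M < ENNReal.ofReal r * ν M := by
      exact (ENNReal.mul_lt_mul_iff_left hM0 (measure_ne_top ν M)).mpr hlt
    exact absurd (lt_of_lt_of_le this hcomb) (lt_irrefl _)
  rw [ae_iff]
  have hcover : {x | ¬ h x ≤ g x} ⊆
      ⋃ p : ℚ × ℚ, {x | g x ≤ ENNReal.ofReal p.1 ∧ ENNReal.ofReal p.2 ≤ h x} ∩
        {x | 0 ≤ p.1 ∧ (p.1:ℝ) < p.2} := by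
    intro x hx
    have hgh : g x < h x := not_le.mp hx
    obtain ⟨q, hq0, hgq, hqh⟩ := ENNReal.lt_iff_exists_rat_btwn.mp hgh
    obtain ⟨r, hr0, hqr, hrh⟩ := ENNReal.lt_iff_exists_rat_btwn.mp hqh
    have hofq : (Real.toNNReal q : ℝ≥0∞) = ENNReal.ofReal q := rfl
    have hofr : (Real.toNNReal r : ℝ≥0∞) = ENNReal.ofReal r := rfl
    have hqr' : (q:ℝ) < r := by
      by_contra hc
      have : ENNReal.ofReal r ≤ ENNReal.ofReal q := ENNReal.ofReal_le_ofReal (by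
        push_cast at hc ⊢; linarith)
      rw [hofq, hofr] at hqr
      exact absurd (lt_of_lt_of_le hqr this) (lt_irrefl _)
    refine Set.mem_iUnion.mpr ⟨⟨q, r⟩, ⟨⟨?_, ?_⟩, ⟨hq0, hqr'⟩⟩⟩
    · rw [← hofq]; exact le_of_lt hgq
    · rw [← hofr]; exact le_of_lt hrh
  refine measure_mono_null hcover (measure_iUnion_null fun p => ?_)
  by_cases hp : 0 ≤ p.1 ∧ (p.1:ℝ) < p.2
  · exact measure_mono_null (Set.inter_subset_left) (hN p.1 p.2 hp.1 hp.2)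
  · have : {x : X | 0 ≤ p.1 ∧ (p.1:ℝ) < p.2} = ∅ := by
      ext x; simpa using hp
    rw [this, Set.inter_empty]
    exact measure_empty

end LowerIntegral
section MeasureExt

variable {s : ℝ}

lemma Scyl_disjoint {b b' : ℕ → Bool} {n i : ℕ} (hi : i < n) (hne : b i ≠ b' i) :
    Scyl s b n ∩ Scyl s b' n = ∅ := by
  ext z
  simp only [Set.mem_inter_iff, Set.mem_empty_iff_false, iff_false, not_and]
  intro h1 h2
  exact hne (Ibr_unique (h1 i hi) (h2 i hi))

/-- Two finite Borel measures on `Î` supported on the fiber over `x`, agreeing on all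
itinerary cylinders and with equal total mass, are equal. -/
lemma measure_ext_fiber (hs : 1 < s) {x : ℝ} (ν₁ ν₂ : Measure (Ihat s))
    [IsFiniteMeasure ν₁] [IsFiniteMeasure ν₂]
    (hsupp₁ : ν₁ {z : Ihat s | z.1 0 ≠ x} = 0) (hsupp₂ : ν₂ {z : Ihat s | z.1 0 ≠ x} = 0)
    (huniv : ν₁ Set.univ = ν₂ Set.univ)
    (hcyl : ∀ (n : ℕ) (b : ℕ → Bool), ν₁ (Scyl s b n) = ν₂ (Scyl s b n)) : ν₁ = ν₂ := by
  classical
  set F : Set (Ihat s) := {z : Ihat s | z.1 0 = x} with hF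
  have hFmeas : MeasurableSet F := (measurable_pin 0) (measurableSet_singleton x)
  have hFc : ∀ (ν : Measure (Ihat s)), ν {z : Ihat s | z.1 0 ≠ x} = 0 →
      ∀ E : Set (Ihat s), ν E = ν (E ∩ F) := by
    intro ν hν E
    have h1 : ν (E \ F) = 0 := measure_mono_null (fun z hz => hz.2) hν
    calc ν E = ν (E ∩ F) + ν (E \ F) := (measure_inter_add_diff E hFmeas).symm
      _ = ν (E ∩ F) := by rw [h1, add_zero]
  have hXF : ν₁ F = ν₂ F := by
    have e1 := hFc ν₁ hsupp₁ Set.univ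
    have e2 := hFc ν₂ hsupp₂ Set.univ
    rw [Set.univ_inter] at e1 e2
    rw [← e1, ← e2, huniv]
  have main : ∀ E' : Set (ℕ → ℝ), MeasurableSet E' →
      ν₁ (Subtype.val ⁻¹' E' ∩ F) = ν₂ (Subtype.val ⁻¹' E' ∩ F) := by
    refine MeasurableSpace.induction_on_inter generateFrom_measurableCylinders.symm
      isPiSystem_measurableCylinders (by simp) ?basic ?compl ?union
    case basic =>
      intro E' hE'
      obtain ⟨t, S, hS, rfl⟩ := (mem_measurableCylinders E').mp hE'
      set n : ℕ := (t.sup id) + 1 with hn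
      have hti : ∀ i ∈ t, i < n := fun i hi => Nat.lt_succ_of_le (Finset.le_sup (f := id) hi)
      set A : (Fin n → Bool) → Set (Ihat s) := fun b =>
        if x ∈ R s (extb n b) n ∧ (fun i : t => G s (extb n b) (i : ℕ) x) ∈ S
          then F ∩ Scyl s (extb n b) n else ∅ with hA
      have hAsub : ∀ b, A b ⊆ F ∩ Scyl s (extb n b) n := by
        intro b
        simp only [hA]
        split
        · exact le_rfl
        · exact Set.empty_subset _
      have hAmeas : ∀ b, MeasurableSet (A b) := by
        intro b
        simp only [hA]
        split
        · exact hFmeas.inter measurableSet_Scyl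
        · exact MeasurableSet.empty
      have hdecomp : Subtype.val ⁻¹' (cylinder t S) ∩ F = ⋃ b, A b := by
        ext z
        constructor
        · rintro ⟨hzcyl, hzF⟩
          set bz : Fin n → Bool := fun i => decide (c s ≤ z.1 (i.1 + 1)) with hbz
          have hzS : z ∈ Scyl s (extb n bz) n := by
            intro i hi
            rw [extb_lt bz hi]
            exact mem_Ibr_total (z.2.1 (i+1))
          obtain ⟨hR, hchain⟩ := fiber_cyl hs z hzF hzS
          have hvec : (fun i : t => G s (extb n bz) (i : ℕ) x) = t.restrict z.1 := by
            funext i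
            exact (hchain i (le_of_lt (hti i i.2))).symm
          refine Set.mem_iUnion.mpr ⟨bz, ?_⟩
          simp only [hA]
          rw [if_pos ⟨hR, by rw [hvec]; exact hzcyl⟩]
          exact ⟨hzF, hzS⟩
        · intro hz
          obtain ⟨b, hzb⟩ := Set.mem_iUnion.mp hz
          by_cases hP : x ∈ R s (extb n b) n ∧ (fun i : t => G s (extb n b) (i : ℕ) x) ∈ S
          · simp only [hA] at hzb
            rw [if_pos hP] at hzb
            obtain ⟨hzF, hzS⟩ := hzb
            obtain ⟨hR, hchain⟩ := fiber_cyl hs z hzF hzS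
            refine ⟨?_, hzF⟩
            show t.restrict z.1 ∈ S
            have hvec : t.restrict z.1 = (fun i : t => G s (extb n b) (i : ℕ) x) := by
              funext i
              exact hchain i (le_of_lt (hti i i.2))
            rw [hvec]
            exact hP.2
          · simp only [hA] at hzb
            rw [if_neg hP] at hzb
            exact absurd hzb (Set.notMem_empty z)
      have hdisj : Pairwise (Function.onFun Disjoint A) := by
        intro b b' hbb
        obtain ⟨i, hi⟩ := Function.ne_iff.mp hbb
        have hSdisj : Scyl s (extb n b) n ∩ Scyl s (extb n b') n = ∅ := by
          refine Scyl_disjoint i.2 ?_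
          rw [extb_lt b i.2, extb_lt b' i.2]
          simpa using hi
        refine Set.disjoint_left.mpr fun z hz hz' => ?_
        have h1 := (hAsub b hz).2
        have h2 := (hAsub b' hz').2
        have : z ∈ Scyl s (extb n b) n ∩ Scyl s (extb n b') n := ⟨h1, h2⟩
        rw [hSdisj] at this
        exact this
      have hAeq : ∀ b, ν₁ (A b) = ν₂ (A b) := by
        intro b
        simp only [hA]
        split
        · have e1 : ν₁ (Scyl s (extb n b) n) = ν₁ (Scyl s (extb n b) n ∩ F) :=
            hFc ν₁ hsupp₁ _
          have e2 : ν₂ (Scyl s (extb n b) n) = ν₂ (Scyl s (extb n b) n ∩ F) :=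
            hFc ν₂ hsupp₂ _
          rw [Set.inter_comm F _, ← e1, ← e2]
          exact hcyl n (extb n b)
        · rw [measure_empty, measure_empty]
      rw [hdecomp, measure_iUnion hdisj hAmeas, measure_iUnion hdisj hAmeas]
      exact tsum_congr hAeq
    case compl =>
      intro E' hE' hC
      have hmeas : MeasurableSet (Subtype.val ⁻¹' E' ∩ F) :=
        (measurable_subtype_coe hE').inter hFmeas
      have hsub : Subtype.val ⁻¹' E' ∩ F ⊆ F := Set.inter_subset_right
      have hset : Subtype.val ⁻¹' E'ᶜ ∩ F = F \ (Subtype.val ⁻¹' E' ∩ F) := by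
        ext z
        constructor
        · rintro ⟨hz1, hz2⟩
          exact ⟨hz2, fun hmem => hz1 hmem.1⟩
        · rintro ⟨hz1, hz2⟩
          exact ⟨fun hmem => hz2 ⟨hmem, hz1⟩, hz1⟩
      rw [hset, measure_diff hsub hmeas.nullMeasurableSet (measure_ne_top ν₁ _),
        measure_diff hsub hmeas.nullMeasurableSet (measure_ne_top ν₂ _), hXF, hC]
    case union =>
      intro g hdisj hmeas hC
      have hset : Subtype.val ⁻¹' (⋃ i, g i) ∩ F
          = ⋃ i, (Subtype.val ⁻¹' (g i) ∩ F) := by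
        rw [Set.preimage_iUnion, Set.iUnion_inter]
      have hdisj' : Pairwise (Function.onFun Disjoint
          (fun i => Subtype.val ⁻¹' (g i) ∩ F)) := by
        intro i j hij
        refine Set.disjoint_left.mpr fun z hz hz' => ?_
        exact Set.disjoint_left.mp ((hdisj hij).preimage Subtype.val) hz.1 hz'.1
      have hmeas' : ∀ i, MeasurableSet (Subtype.val ⁻¹' (g i) ∩ F) :=
        fun i => (measurable_subtype_coe (hmeas i)).inter hFmeas
      rw [hset, measure_iUnion hdisj' hmeas', measure_iUnion hdisj' hmeas']
      exact tsum_congr hC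
  ext E hE
  obtain ⟨E', hE', hEeq⟩ := MeasurableSpace.measurableSet_comap.mp hE
  calc ν₁ E = ν₁ (E ∩ F) := hFc ν₁ hsupp₁ E
    _ = ν₂ (E ∩ F) := by rw [← hEeq]; exact main E' hE'
    _ = ν₂ E := (hFc ν₂ hsupp₂ E).symm

end MeasureExt
section MoreHelpers

variable {s : ℝ}

lemma exists_phi0 (φ : ℝ → ℝ) (hφbv : BoundedVariationOn φ I) :
    ∃ φ₀ : ℝ → ℝ, Measurable φ₀ ∧ (∀ x ∈ I, φ₀ x = φ x) ∧ ∀ x, x ∉ I → φ₀ x = 0 := by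
  obtain ⟨p, q, hp, hq, hpq⟩ :=
    hφbv.locallyBoundedVariationOn.exists_monotoneOn_sub_monotoneOn
  set cl : ℝ → ℝ := fun x => max 0 (min 1 x) with hcl
  have hclmono : Monotone cl := fun a b hab =>
    max_le_max le_rfl (min_le_min le_rfl hab)
  have hclmem : ∀ x, cl x ∈ I := fun x =>
    ⟨le_max_left _ _, max_le zero_le_one (min_le_left _ _)⟩
  have hclI : ∀ x ∈ I, cl x = x := by
    intro x hx
    rw [hcl]
    simp only
    rw [min_eq_right hx.2, max_eq_right hx.1]
  have hmono : ∀ (r : ℝ → ℝ), MonotoneOn r I → Monotone (r ∘ cl) := by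
    intro r hr a b hab
    exact hr (hclmem a) (hclmem b) (hclmono hab)
  refine ⟨Set.indicator I (fun x => p (cl x) - q (cl x)), ?_, ?_, ?_⟩
  · exact (((hmono p hp).measurable).sub ((hmono q hq).measurable)).indicator measurableSet_Icc
  · intro x hx
    rw [Set.indicator_of_mem hx, hclI x hx, hpq]
    rfl
  · intro x hx
    rw [Set.indicator_of_notMem hx]

lemma measurable_gb (β : Bool) : Measurable (gb s β) := by
  unfold gb
  cases β
  · simp only [Bool.false_eq_true, if_false]
    exact (measurable_id.add_const s |>.sub_const 2).div_const s
  · simp only [if_true]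
    exact measurable_const.sub (measurable_id.div_const s)

lemma measurable_G (b : ℕ → Bool) (n : ℕ) : Measurable (G s b n) := by
  induction n with
  | zero => exact measurable_id
  | succ n ih => exact (measurable_gb (b n)).comp ih

lemma measurableSet_R (b : ℕ → Bool) (n : ℕ) : MeasurableSet (R s b n) := by
  induction n with
  | zero => exact MeasurableSet.univ
  | succ n ih =>
      exact ih.inter (((measurable_gb (b n)).comp (measurable_G b n))
        (measurableSet_Ibr (b n)))

lemma univ_eq_iUnion_Scyl (n : ℕ) :
    (Set.univ : Set (Ihat s)) = ⋃ bf : Fin n → Bool, Scyl s (extb n bf) n := by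
  ext z
  simp only [Set.mem_univ, true_iff, Set.mem_iUnion]
  refine ⟨fun i => decide (c s ≤ z.1 (i.1 + 1)), fun i hi => ?_⟩
  rw [extb_lt _ hi]
  exact mem_Ibr_total (z.2.1 (i+1))

lemma pairwise_Scyl_disjoint (n : ℕ) :
    Pairwise (Function.onFun Disjoint (fun bf : Fin n → Bool => Scyl s (extb n bf) n)) := by
  intro b b' hbb
  obtain ⟨i, hi⟩ := Function.ne_iff.mp hbb
  have hSdisj : Scyl s (extb n b) n ∩ Scyl s (extb n b') n = ∅ := by
    refine Scyl_disjoint i.2 ?_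
    rw [extb_lt b i.2, extb_lt b' i.2]
    simpa using hi
  exact Set.disjoint_iff_inter_eq_empty.mpr hSdisj

lemma sum_cancel {ι : Type*} [Fintype ι] [DecidableEq ι] (g h : ι → ℝ≥0∞) (hle : ∀ i, h i ≤ g i)
    (hsum : ∑ i, g i = ∑ i, h i) (hfin : ∑ i, h i ≠ ∞) : ∀ i, g i = h i := by
  intro i
  refine le_antisymm ?_ (hle i)
  have h1 : g i + ∑ j ∈ Finset.univ.erase i, h j ≤ h i + ∑ j ∈ Finset.univ.erase i, h j := by
    calc g i + ∑ j ∈ Finset.univ.erase i, h j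
        ≤ g i + ∑ j ∈ Finset.univ.erase i, g j :=
          add_le_add_right (Finset.sum_le_sum fun j _ => hle j) _
      _ = ∑ j, g j := by rw [← Finset.add_sum_erase _ g (Finset.mem_univ i)]
      _ = ∑ j, h j := hsum
      _ = h i + ∑ j ∈ Finset.univ.erase i, h j := by
          rw [← Finset.add_sum_erase _ h (Finset.mem_univ i)]
  have hfin' : ∑ j ∈ Finset.univ.erase i, h j ≠ ∞ := by
    refine ne_top_of_le_ne_top hfin ?_
    exact Finset.sum_le_sum_of_subset (Finset.erase_subset _ _)
  exact (ENNReal.add_le_add_iff_right hfin').mp h1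

lemma pointCyl_zero_eq {x : ℝ} :
    pointCyl s (fun _ => x) 0 = {z : Ihat s | z.1 0 = x} := by
  ext z
  constructor
  · intro h
    exact h 0 le_rfl
  · intro h i hi
    rw [Nat.le_zero.mp hi]
    exact h

end MoreHelpers
/-- the disintegration of `μ̂` over `π₀` satisfies `α_x = φ(x)·μ̂_x`
for Lebesgue-a.e. `x ∈ I`, and hence `μ̂(E) = ∫_I α_x(E) dm(x)` for Borel `E`. -/
theorem disintegration_formula (s : ℝ) (hs₁ : Real.sqrt 2 < s) (hs₂ : s < 2)
    (φ : ℝ → ℝ)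
    (hφpos : ∀ x ∈ I \ PC s, 0 < φ x)
    (hφbv : BoundedVariationOn φ I)
    (hφeq : ∀ x ∈ I \ PC s, ∀ n : ℕ,
      φ x = ∑' y : {y : ℝ // y ∈ I ∧ (f s)^[n] y = x}, φ y.1 / s ^ n)
    (μ : Measure ℝ) (hμprob : IsProbabilityMeasure μ) (hμerg : Ergodic (f s) μ)
    (hμdens : μ = (volume.restrict I).withDensity fun x => ENNReal.ofReal (φ x))
    (μhat : Measure (Ihat s)) (hμhatprob : IsProbabilityMeasure μhat)
    (hmarg : ∀ n : ℕ, μhat.map (fun x : Ihat s => x.1 n) = μ)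
    (α : ℝ → Measure (Ihat s))
    (hαsupp : ∀ x ∈ I \ PC s, α x {z : Ihat s | z.1 0 ≠ x} = 0)
    (hαcyl : ∀ x ∈ I \ PC s, ∀ (y : ℕ → ℝ) (n : ℕ), y 0 = x →
      (∀ i ≤ n, y i ∈ I) → (∀ i < n, f s (y (i + 1)) = y i) →
      α x (pointCyl s y n) = ENNReal.ofReal (φ (y n) / s ^ n))
    (κ : ℝ → Measure (Ihat s))
    (hκprob : ∀ᵐ x ∂μ, IsProbabilityMeasure (κ x))
    (hκsupp : ∀ᵐ x ∂μ, κ x {z : Ihat s | z.1 0 ≠ x} = 0)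
    (hκdis : ∀ E : Set (Ihat s), MeasurableSet E → μhat E = ∫⁻ x, κ x E ∂μ) :
    (∀ᵐ x ∂(volume.restrict I), α x = ENNReal.ofReal (φ x) • κ x) ∧
    ∀ E : Set (Ihat s), MeasurableSet E → μhat E = ∫⁻ x in I, α x E ∂volume := by
  classical
  have hs : 1 < s := one_lt_s hs₁
  have hImeas : MeasurableSet I := measurableSet_Icc
  obtain ⟨φ₀, hφ₀meas, hφ₀I, hφ₀nI⟩ := exists_phi0 φ hφbv
  set φ' : ℝ → ℝ≥0∞ := fun x => ENNReal.ofReal (φ₀ x) with hφ'def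
  have hφ'meas : Measurable φ' := hφ₀meas.ennreal_ofReal
  have hφ'0 : ∀ x, x ∉ I → φ' x = 0 := fun x hx => by
    rw [hφ'def]; simp only; rw [hφ₀nI x hx, ENNReal.ofReal_zero]
  have hφ'I : ∀ x, x ∈ I → φ' x = ENNReal.ofReal (φ x) := fun x hx => by
    rw [hφ'def]; simp only; rw [hφ₀I x hx]
  have hμ' : μ = (volume.restrict I).withDensity φ' := by
    rw [hμdens]
    refine withDensity_congr_ae ?_
    filter_upwards [ae_restrict_mem hImeas] with x hx
    exact (hφ'I x hx).symm
  haveI hfinI : IsFiniteMeasure (volume.restrict I) := by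
    constructor
    rw [Measure.restrict_apply_univ]
    simp only [I, Real.volume_Icc]
    exact ENNReal.ofReal_lt_top
  -- the candidate fiber measures as functions of the base point
  set Ψ : (ℕ → Bool) → ℕ → ℝ → ℝ≥0∞ := fun b n u =>
    (R s b n).indicator (fun u => φ' (G s b n u)) u * ENNReal.ofReal (1/s) ^ n with hΨdef
  have hΨapp : ∀ b n u, Ψ b n u =
      (R s b n).indicator (fun u => φ' (G s b n u)) u * ENNReal.ofReal (1/s) ^ n :=
    fun _ _ _ => rfl
  have hΨmeas : ∀ b n, Measurable (Ψ b n) := fun b n =>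
    ((hφ'meas.comp (measurable_G b n)).indicator (measurableSet_R b n)).mul_const _
  have hΨval0 : ∀ b n u, u ∉ R s b n → Ψ b n u = 0 := by
    intro b n u hu
    rw [hΨapp, Set.indicator_of_notMem hu, zero_mul]
  have hΨ0 : ∀ b n u, u ∉ I → Ψ b n u = 0 := by
    intro b n u hu
    by_cases hR : u ∈ R s b n
    · cases n with
      | zero =>
          rw [hΨapp, Set.indicator_of_mem hR]
          show φ' u * _ = 0
          rw [hφ'0 u hu, zero_mul]
      | succ m =>
          exact absurd (R_subset_I hs hs₂ (Nat.succ_le_succ (Nat.zero_le m)) hR) hu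
    · exact hΨval0 b n u hR
  have hΨval : ∀ b n u, u ∈ I \ PC s → u ∈ R s b n →
      Ψ b n u = ENNReal.ofReal (φ (G s b n u) / s ^ n) := by
    intro b n u hu hR
    have hGI : G s b n u ∈ I := G_mem_I hs hR hu.1
    have hGPC : G s b n u ∉ PC s := G_not_PC hs hu.2 hR
    have hGpos : 0 ≤ φ (G s b n u) := le_of_lt (hφpos _ ⟨hGI, hGPC⟩)
    rw [hΨapp, Set.indicator_of_mem hR, hφ'I _ hGI,
      ← ENNReal.ofReal_pow (by positivity : (0:ℝ) ≤ 1/s),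
      ← ENNReal.ofReal_mul hGpos]
    congr 1
    rw [one_div, inv_pow, ← one_div, mul_one_div]
  -- a.e. transfer from μ to Lebesgue on I
  have haetrans : ∀ (p : ℝ → Prop), (∀ᵐ x ∂μ, p x) →
      (∀ᵐ x ∂(volume.restrict I), x ∈ I \ PC s → p x) := by
    intro p hp
    have hμN : μ {x | ¬ p x} = 0 := hp
    set M := toMeasurable μ {x | ¬ p x} with hM
    have hμM : μ M = 0 := by rw [hM, measure_toMeasurable]; exact hμN
    have hMmeas : MeasurableSet M := measurableSet_toMeasurable μ _
    rw [hμ', withDensity_apply _ hMmeas] at hμM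
    have hae0 : ∀ᵐ x ∂((volume.restrict I).restrict M), φ' x = 0 := by
      have := (lintegral_eq_zero_iff hφ'meas).mp hμM
      exact this.mono fun x hx => hx
    have hae1 : ∀ᵐ x ∂(volume.restrict I), x ∈ M → φ' x = 0 :=
      (ae_restrict_iff' hMmeas).mp hae0
    filter_upwards [hae1] with x hx hxI
    by_contra hpx
    have hxM : x ∈ M := subset_toMeasurable μ _ hpx
    have h0 : φ' x = 0 := hx hxM
    rw [hφ'I x hxI.1, ENNReal.ofReal_eq_zero] at h0
    exact absurd (hφpos x hxI) (not_lt.mpr h0)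
  have haeIPC : ∀ᵐ x ∂(volume.restrict I), x ∈ I \ PC s := by
    have h1 : ∀ᵐ x ∂(volume.restrict I), x ∈ I := ae_restrict_mem hImeas
    have h2 : ∀ᵐ x ∂(volume.restrict I), x ∉ PC s := by
      rw [ae_iff]
      have hPC : volume (PC s) = 0 := Set.Countable.measure_zero PC_countable volume
      have : {x : ℝ | ¬ x ∉ PC s} = PC s := by ext y; simp
      rw [this]
      exact measure_mono_null (fun y hy => hy) (by
        rw [Measure.restrict_apply' hImeas]
        exact measure_mono_null Set.inter_subset_left hPC)
    filter_upwards [h1, h2] with x hx1 hx2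
    exact ⟨hx1, hx2⟩
  -- the key identity between the kernel and the candidate densities
  have hkey : ∀ (n : ℕ) (b : ℕ → Bool) (A : Set ℝ), MeasurableSet A →
      ∫⁻ u, A.indicator (fun u => φ' u * κ u (Scyl s b n)) u ∂(volume.restrict I)
        = ∫⁻ u, A.indicator (Ψ b n) u ∂(volume.restrict I) := by
    intro n b A hA
    have hScmeas : MeasurableSet (Scyl s b n) := measurableSet_Scyl
    set E : Set (Ihat s) := Scyl s b n ∩ (fun z : Ihat s => z.1 0) ⁻¹' A with hE
    have hEmeas : MeasurableSet E := hScmeas.inter ((measurable_pin 0) hA)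
    have hL : μhat E = ∫⁻ u, A.indicator (fun u => φ' u * κ u (Scyl s b n)) u
        ∂(volume.restrict I) := by
      rw [hκdis E hEmeas]
      have hae : ∀ᵐ x ∂μ, κ x E = A.indicator (fun x => κ x (Scyl s b n)) x := by
        filter_upwards [hκsupp] with x hx
        by_cases hxA : x ∈ A
        · rw [Set.indicator_of_mem hxA]
          have hnull : κ x (Scyl s b n \ E) = 0 := by
            refine measure_mono_null ?_ hx
            rintro z ⟨hz1, hz2⟩
            intro h0
            exact hz2 ⟨hz1, by rw [Set.mem_preimage, h0]; exact hxA⟩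
          have hcup : E ∪ (Scyl s b n \ E) = Scyl s b n :=
            Set.union_diff_cancel Set.inter_subset_left
          refine le_antisymm (measure_mono Set.inter_subset_left) ?_
          calc κ x (Scyl s b n) = κ x (E ∪ (Scyl s b n \ E)) := by rw [hcup]
            _ ≤ κ x E + κ x (Scyl s b n \ E) := measure_union_le _ _
            _ = κ x E := by rw [hnull, add_zero]
        · rw [Set.indicator_of_notMem hxA]
          refine measure_mono_null ?_ hx
          rintro z ⟨hz1, hz2⟩
          exact fun h0 => hxA (h0 ▸ hz2)
      rw [lintegral_congr_ae hae, hμ',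
        lintegral_withDensity_eq_lintegral_mul_non_measurable _ hφ'meas
          (Filter.Eventually.of_forall fun x => ENNReal.ofReal_lt_top)]
      refine lintegral_congr fun x => ?_
      by_cases hxA : x ∈ A
      · rw [Pi.mul_apply, Set.indicator_of_mem hxA, Set.indicator_of_mem hxA]
      · rw [Pi.mul_apply, Set.indicator_of_notMem hxA, Set.indicator_of_notMem hxA, mul_zero]
    have hR : μhat E = ∫⁻ u, A.indicator (Ψ b n) u ∂(volume.restrict I) := by
      have hEpre : E = (fun z : Ihat s => z.1 n) ⁻¹' (D s b n ∩ (f s)^[n] ⁻¹' A) := by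
        ext z
        have hz0 : z.1 0 = (f s)^[n] (z.1 n) := by
          have := zcoord z n 0
          rwa [Nat.zero_add] at this
        simp only [hE, Set.mem_inter_iff, Set.mem_preimage]
        rw [Scyl_eq_preimage]
        constructor
        · rintro ⟨h1, h2⟩
          exact ⟨h1, by rwa [← hz0]⟩
        · rintro ⟨h1, h2⟩
          exact ⟨h1, by rwa [hz0]⟩
      have hDA : MeasurableSet (D s b n ∩ (f s)^[n] ⁻¹' A) :=
        measurableSet_D.inter (hA.preimage (measurable_iter_f n))
      have hmap : μhat E = μ (D s b n ∩ (f s)^[n] ⁻¹' A) := by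
        rw [hEpre, ← hmarg n, Measure.map_apply (measurable_pin n) hDA]
      rw [hmap, hμ', withDensity_apply _ hDA, Measure.restrict_restrict hDA,
        ← lintegral_indicator (hDA.inter hImeas)]
      have hpt : ∀ t, (D s b n ∩ (f s)^[n] ⁻¹' A ∩ I).indicator φ' t
          = (D s b n).indicator
              (fun t => (A.indicator (fun _ => (1:ℝ≥0∞)) ((f s)^[n] t)) * φ' t) t := by
        intro t
        by_cases h1 : t ∈ D s b n
        · by_cases h2 : (f s)^[n] t ∈ A
          · by_cases h3 : t ∈ I
            · rw [Set.indicator_of_mem (Set.mem_inter (Set.mem_inter h1 (show t ∈ (f s)^[n] ⁻¹' A from h2)) h3), Set.indicator_of_mem h1,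
                Set.indicator_of_mem h2, one_mul]
            · rw [Set.indicator_of_notMem (fun hh => h3 hh.2), Set.indicator_of_mem h1,
                Set.indicator_of_mem h2, one_mul, hφ'0 t h3]
          · rw [Set.indicator_of_notMem (fun hh => h2 hh.1.2), Set.indicator_of_mem h1,
              Set.indicator_of_notMem h2, zero_mul]
        · rw [Set.indicator_of_notMem (fun hh => h1 hh.1.1), Set.indicator_of_notMem h1]
      rw [lintegral_congr hpt, cov hs b n (A.indicator fun _ => (1:ℝ≥0∞)) φ',
        ← lintegral_const_mul' _ _ (ENNReal.pow_ne_top ENNReal.ofReal_ne_top)]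
      have hpt2 : ∀ u, ENNReal.ofReal (1/s) ^ n *
            (R s b n).indicator
              (fun u => A.indicator (fun _ => (1:ℝ≥0∞)) u * φ' (G s b n u)) u
          = A.indicator (Ψ b n) u := by
        intro u
        by_cases h1 : u ∈ R s b n
        · by_cases h2 : u ∈ A
          · rw [Set.indicator_of_mem h1, Set.indicator_of_mem h2, Set.indicator_of_mem h2,
              hΨapp, Set.indicator_of_mem h1, one_mul]
            ring
          · rw [Set.indicator_of_mem h1, Set.indicator_of_notMem h2,
              Set.indicator_of_notMem h2, zero_mul, mul_zero]
        · by_cases h2 : u ∈ A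
          · rw [Set.indicator_of_notMem h1, Set.indicator_of_mem h2, hΨval0 b n u h1,
              mul_zero]
          · rw [Set.indicator_of_notMem h1, Set.indicator_of_notMem h2, mul_zero]
      rw [lintegral_congr hpt2]
      have hvan : ∀ u, A.indicator (Ψ b n) u = I.indicator (A.indicator (Ψ b n)) u := by
        intro u
        by_cases h3 : u ∈ I
        · rw [Set.indicator_of_mem h3]
        · rw [Set.indicator_of_notMem h3]
          by_cases h2 : u ∈ A
          · rw [Set.indicator_of_mem h2, hΨ0 b n u h3]
          · rw [Set.indicator_of_notMem h2]
      rw [lintegral_congr hvan, lintegral_indicator hImeas]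
    rw [← hL]
    exact hR
  -- comparison, a.e.
  have hge : ∀ (n : ℕ) (bf : Fin n → Bool), ∀ᵐ u ∂(volume.restrict I),
      Ψ (extb n bf) n u ≤ φ' u * κ u (Scyl s (extb n bf) n) :=
    fun n bf => ae_le_of_forall_lintegral_indicator_eq (hΨmeas _ _)
      (fun A hA => hkey n (extb n bf) A hA)
  have hκuniv' : ∀ᵐ u ∂(volume.restrict I), κ u Set.univ = 1 := by
    have h := haetrans (fun x => IsProbabilityMeasure (κ x)) hκprob
    filter_upwards [h, haeIPC] with u h1 h2
    exact (h1 h2).measure_univ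
  have hgsum : ∀ᵐ u ∂(volume.restrict I), ∀ n : ℕ,
      ∑ bf : Fin n → Bool, φ' u * κ u (Scyl s (extb n bf) n) = φ' u := by
    filter_upwards [hκuniv'] with u h1
    intro n
    rw [← Finset.mul_sum]
    have h2 : κ u Set.univ = ∑ bf : Fin n → Bool, κ u (Scyl s (extb n bf) n) := by
      calc κ u Set.univ = κ u (⋃ bf : Fin n → Bool, Scyl s (extb n bf) n) := by
            rw [← univ_eq_iUnion_Scyl n]
        _ = ∑' bf : Fin n → Bool, κ u (Scyl s (extb n bf) n) :=
            measure_iUnion (pairwise_Scyl_disjoint n) (fun _ => measurableSet_Scyl)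
        _ = ∑ bf : Fin n → Bool, κ u (Scyl s (extb n bf) n) := tsum_fintype _
    rw [← h2, h1, mul_one]
  have hΨsum : ∀ u, u ∈ I \ PC s → ∀ n : ℕ,
      ∑ bf : Fin n → Bool, Ψ (extb n bf) n u = φ' u := by
    intro u hu n
    have h1 := phi_sum hs hs₂ φ hφeq hu n
    have h2 : ∀ bf : Fin n → Bool, Ψ (extb n bf) n u
        = ENNReal.ofReal (Set.indicator {b : Fin n → Bool | u ∈ R s (extb n b) n}
            (fun b => φ (G s (extb n b) n u) / s ^ n) bf) := by
      intro bf
      by_cases hR : u ∈ R s (extb n bf) n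
      · rw [hΨval _ _ _ hu hR, Set.indicator_of_mem
          (show bf ∈ {b : Fin n → Bool | u ∈ R s (extb n b) n} from hR)]
      · rw [hΨval0 _ _ _ hR, Set.indicator_of_notMem
          (show bf ∉ {b : Fin n → Bool | u ∈ R s (extb n b) n} from hR), ENNReal.ofReal_zero]
    have hnn : ∀ bf : Fin n → Bool, bf ∈ Finset.univ →
        0 ≤ Set.indicator {b : Fin n → Bool | u ∈ R s (extb n b) n}
          (fun b => φ (G s (extb n b) n u) / s ^ n) bf := by
      intro bf _
      by_cases hR : u ∈ R s (extb n bf) n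
      · rw [Set.indicator_of_mem
          (show bf ∈ {b : Fin n → Bool | u ∈ R s (extb n b) n} from hR)]
        have hGI : G s (extb n bf) n u ∈ I := G_mem_I hs hR hu.1
        have hGPC : G s (extb n bf) n u ∉ PC s := G_not_PC hs hu.2 hR
        have := hφpos _ ⟨hGI, hGPC⟩
        positivity
      · rw [Set.indicator_of_notMem
          (show bf ∉ {b : Fin n → Bool | u ∈ R s (extb n b) n} from hR)]
    rw [hφ'I u hu.1]
    calc ∑ bf : Fin n → Bool, Ψ (extb n bf) n u
        = ∑ bf : Fin n → Bool, ENNReal.ofReal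
            (Set.indicator {b : Fin n → Bool | u ∈ R s (extb n b) n}
              (fun b => φ (G s (extb n b) n u) / s ^ n) bf) :=
          Finset.sum_congr rfl fun bf _ => h2 bf
      _ = ENNReal.ofReal (∑ bf : Fin n → Bool,
            Set.indicator {b : Fin n → Bool | u ∈ R s (extb n b) n}
              (fun b => φ (G s (extb n b) n u) / s ^ n) bf) :=
          (ENNReal.ofReal_sum_of_nonneg hnn).symm
      _ = ENNReal.ofReal (φ u) := by rw [← h1]
  have heqae : ∀ᵐ u ∂(volume.restrict I), ∀ (n : ℕ) (bf : Fin n → Bool),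
      φ' u * κ u (Scyl s (extb n bf) n) = Ψ (extb n bf) n u := by
    have hgeall : ∀ᵐ u ∂(volume.restrict I), ∀ (n : ℕ) (bf : Fin n → Bool),
        Ψ (extb n bf) n u ≤ φ' u * κ u (Scyl s (extb n bf) n) := by
      rw [ae_all_iff]
      intro n
      rw [ae_all_iff]
      exact fun bf => hge n bf
    filter_upwards [hgeall, hgsum, haeIPC] with u h1 h2 h3
    intro n
    exact sum_cancel (fun bf => φ' u * κ u (Scyl s (extb n bf) n))
      (fun bf => Ψ (extb n bf) n u) (fun bf => h1 n bf)
      ((h2 n).trans (hΨsum u h3 n).symm)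
      (by rw [hΨsum u h3 n, hφ'I u h3.1]; exact ENNReal.ofReal_ne_top)
  -- values of α on cylinders
  have hαF : ∀ x, x ∈ I \ PC s → α x {z : Ihat s | z.1 0 = x} = ENNReal.ofReal (φ x) := by
    intro x hx
    have h := hαcyl x hx (fun _ => x) 0 rfl (fun i _ => hx.1)
      (fun i hi => absurd hi (Nat.not_lt_zero i))
    rw [pointCyl_zero_eq] at h
    simpa using h
  have hαuniv : ∀ x, x ∈ I \ PC s → α x Set.univ = ENNReal.ofReal (φ x) := by
    intro x hx
    have hFmeas : MeasurableSet {z : Ihat s | z.1 0 = x} :=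
      (measurable_pin 0) (measurableSet_singleton x)
    have h1 := (measure_inter_add_diff (μ := α x) Set.univ hFmeas).symm
    have h2 : α x (Set.univ \ {z : Ihat s | z.1 0 = x}) = 0 :=
      measure_mono_null (fun z hz => hz.2) (hαsupp x hx)
    rw [Set.univ_inter] at h1
    rw [h1, h2, add_zero, hαF x hx]
  have hαS : ∀ x, x ∈ I \ PC s → ∀ (n : ℕ) (b : ℕ → Bool),
      α x (Scyl s b n) = Ψ b n x := by
    intro x hx n b
    have hFmeas : MeasurableSet {z : Ihat s | z.1 0 = x} :=
      (measurable_pin 0) (measurableSet_singleton x)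
    have hsplit : α x (Scyl s b n) = α x (Scyl s b n ∩ {z : Ihat s | z.1 0 = x}) := by
      have h1 := (measure_inter_add_diff (μ := α x) (Scyl s b n) hFmeas).symm
      have h2 : α x (Scyl s b n \ {z : Ihat s | z.1 0 = x}) = 0 :=
        measure_mono_null (fun z hz => hz.2) (hαsupp x hx)
      rw [h1, h2, add_zero]
    by_cases hR : x ∈ R s b n
    · rw [hsplit, Set.inter_comm, cyl_fiber_eq hs hR,
        hαcyl x hx (fun i => G s b i x) n rfl
          (fun i hi => G_mem_I hs (R_mono hi hR) hx.1)
          (fun i hi => f_G_succ hs (R_mono hi hR)),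
        hΨval b n x hx hR]
    · rw [hsplit, Set.inter_comm, cyl_fiber_empty hs hR, measure_empty, hΨval0 b n x hR]
  -- part 1
  have hpart1 : ∀ᵐ x ∂(volume.restrict I), α x = ENNReal.ofReal (φ x) • κ x := by
    have hκsupp' := haetrans (fun x => κ x {z : Ihat s | z.1 0 ≠ x} = 0) hκsupp
    have hκprob' := haetrans (fun x => IsProbabilityMeasure (κ x)) hκprob
    filter_upwards [heqae, haeIPC, hκsupp', hκprob'] with x h1 h2 h3 h4
    have hκs := h3 h2
    haveI hκp : IsProbabilityMeasure (κ x) := h4 h2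
    haveI : IsFiniteMeasure (α x) := by
      constructor
      rw [hαuniv x h2]
      exact ENNReal.ofReal_lt_top
    haveI : IsFiniteMeasure (ENNReal.ofReal (φ x) • κ x) := by
      constructor
      rw [Measure.smul_apply, smul_eq_mul, measure_univ, mul_one]
      exact ENNReal.ofReal_lt_top
    refine measure_ext_fiber hs (α x) (ENNReal.ofReal (φ x) • κ x) (hαsupp x h2) ?_ ?_ ?_
    · rw [Measure.smul_apply, smul_eq_mul, hκs, mul_zero]
    · rw [hαuniv x h2, Measure.smul_apply, smul_eq_mul, measure_univ, mul_one]
    · intro n b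
      set bf : Fin n → Bool := fun i => b i.1 with hbf
      have hagree : ∀ i, i < n → extb n bf i = b i := fun i hi => extb_lt bf hi
      have e1 : Scyl s b n = Scyl s (extb n bf) n :=
        (Scyl_congr hagree).symm
      have hGfun : G s b n = G s (extb n bf) n :=
        funext fun u => G_congr (s := s) (fun i hi => (hagree i hi).symm) u
      have e2 : Ψ b n x = Ψ (extb n bf) n x := by
        rw [hΨapp, hΨapp, R_congr (s := s) (fun i hi => (hagree i hi).symm), hGfun]
      rw [hαS x h2 n b, Measure.smul_apply, smul_eq_mul, e1, e2, ← hφ'I x h2.1]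
      exact (h1 n bf).symm
  refine ⟨hpart1, ?_⟩
  intro E hE
  rw [hκdis E hE, hμ',
    lintegral_withDensity_eq_lintegral_mul_non_measurable _ hφ'meas
      (Filter.Eventually.of_forall fun x => ENNReal.ofReal_lt_top)]
  refine (lintegral_congr_ae ?_).symm
  filter_upwards [hpart1, ae_restrict_mem hImeas] with x h1 h2
  rw [h1, Pi.mul_apply, Measure.smul_apply, smul_eq_mul, hφ'I x h2]


end Tent
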